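/- (Unique solvability of the discrete scheme.) For every bounded linear functional g : W → ℝ there exists a unique pair (u_h, v_h) ∈ W_h × W_h such that a(u_h, v_h; φ_h, ψ_h) = g(φ_h) for all (φ_h, ψ_h) ∈ W_h × W_h, and it satisfies ‖(u_h, v_h)‖_{𝒱_h} ≤ (1/C_s)·‖g‖_{W*} with C_s = 1/(48√2). -/

import Mathlib

open RealInnerProductSpace

section Stmt8Aux

variable {W : Type*} [NormedAddCommGroup W] [InnerProductSpace ℝ W]
  (V : Submodule ℝ W) (T : V →ₗ[ℝ] W)
  (m : W →ₗ[ℝ] W →ₗ[ℝ] ℝ)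
  (Wh : Submodule ℝ W) (hWhV : Wh ≤ V)

/-- The discrete bilinear form as a linear map into the dual. -/
noncomputable def stmt8B : (Wh × Wh) →ₗ[ℝ] Module.Dual ℝ (Wh × Wh) :=
  LinearMap.mk₂ ℝ (fun p q : Wh × Wh =>
    ⟪T ⟨(p.1 : W), hWhV p.1.2⟩, (q.1 : W)⟫ + ⟪(p.2 : W), (q.1 : W)⟫ +
      m (p.2 : W) (q.1 : W) + ⟪(p.1 : W), (q.2 : W)⟫ - m (p.2 : W) (q.2 : W))
    (by
      intro p p' q
      have hT : (⟨(((p + p').1 : Wh) : W), hWhV (p + p').1.2⟩ : V)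
          = ⟨(p.1 : W), hWhV p.1.2⟩ + ⟨(p'.1 : W), hWhV p'.1.2⟩ := by
        ext; simp
      rw [hT, map_add]
      simp only [Prod.fst_add, Prod.snd_add, Submodule.coe_add, map_add,
        LinearMap.add_apply, inner_add_left]
      ring)
    (by
      intro c p q
      have hT : (⟨(((c • p).1 : Wh) : W), hWhV (c • p).1.2⟩ : V)
          = c • (⟨(p.1 : W), hWhV p.1.2⟩ : V) := by
        ext; simp
      rw [hT, map_smul]
      simp only [Prod.smul_fst, Prod.smul_snd, Submodule.coe_smul, map_smul,
        LinearMap.smul_apply, real_inner_smul_left, smul_eq_mul]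
      ring)
    (by
      intro p q q'
      simp only [Prod.fst_add, Prod.snd_add, Submodule.coe_add, map_add,
        inner_add_right]
      ring)
    (by
      intro c p q
      simp only [Prod.smul_fst, Prod.smul_snd, Submodule.coe_smul, map_smul,
        real_inner_smul_right, smul_eq_mul]
      ring)

@[simp] lemma stmt8B_apply (p q : Wh × Wh) :
    stmt8B V T m Wh hWhV p q =
      ⟪T ⟨(p.1 : W), hWhV p.1.2⟩, (q.1 : W)⟫ + ⟪(p.2 : W), (q.1 : W)⟫ +
        m (p.2 : W) (q.1 : W) + ⟪(p.1 : W), (q.2 : W)⟫ - m (p.2 : W) (q.2 : W) := rfl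

/-- The stability estimate for the discrete scheme. -/
lemma stmt8_est (hT1 : ∀ u : V, 0 ≤ ⟪T u, (u : W)⟫)
    (hT2 : ∀ u : V, ‖T u‖ ^ 2 ≤ 5 * ‖(u : W)‖ ^ 2)
    (hmpsd : ∀ x : W, 0 ≤ m x x)
    (Th : Wh →ₗ[ℝ] Wh)
    (hTh : ∀ (u φ : Wh),
      ⟪((Th u : Wh) : W), (φ : W)⟫ = ⟪T ⟨(u : W), hWhV u.2⟩, (φ : W)⟫)
    (g : W →L[ℝ] ℝ) (u v : Wh)
    (hsol : ∀ φh ψh : Wh,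
      ⟪T ⟨(u : W), hWhV u.2⟩, (φh : W)⟫ + ⟪(v : W), (φh : W)⟫ +
        m (v : W) (φh : W) + ⟪(u : W), (ψh : W)⟫ - m (v : W) (ψh : W) =
        g (φh : W)) :
    ‖(u : W)‖ ≤ ‖g‖ ∧ ‖(v : W)‖ ≤ (1 + Real.sqrt 5) * ‖g‖ ∧
      ‖((Th u : Wh) : W)‖ ≤ Real.sqrt 5 * ‖g‖ := by
  set Tu : W := T ⟨(u : W), hWhV u.2⟩ with hTu
  have h5 : Real.sqrt 5 ^ 2 = 5 := Real.sq_sqrt (by norm_num)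
  have h5' : (0:ℝ) ≤ Real.sqrt 5 := Real.sqrt_nonneg 5
  have hg0 : (0:ℝ) ≤ ‖g‖ := norm_nonneg g
  have cancel : ∀ a b : ℝ, 0 ≤ a → a ^ 2 ≤ b * a → 0 ≤ b → a ≤ b := by
    intro a b ha h hb
    rcases ha.eq_or_lt with h0 | h0
    · simpa [← h0] using hb
    · have : a * a ≤ b * a := by nlinarith
      exact le_of_mul_le_mul_right this h0
  -- second equation: m(v,ψ) = ⟪u,ψ⟫ on Wh
  have ha : ∀ ψ : Wh, m (v : W) (ψ : W) = ⟪(u : W), (ψ : W)⟫ := by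
    intro ψ
    have h := hsol 0 ψ
    simp only [ZeroMemClass.coe_zero, inner_zero_right, map_zero] at h
    linarith
  -- first equation
  have hb : ∀ φ : Wh, ⟪Tu, (φ : W)⟫ + ⟪(v : W), (φ : W)⟫ + m (v : W) (φ : W)
      = g (φ : W) := by
    intro φ
    have h := hsol φ 0
    simp only [ZeroMemClass.coe_zero, inner_zero_right, map_zero] at h
    linarith
  have hTub : ‖Tu‖ ≤ Real.sqrt 5 * ‖(u : W)‖ := by
    have h := hT2 ⟨(u : W), hWhV u.2⟩
    nlinarith [norm_nonneg Tu, norm_nonneg ((u : W)),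
      mul_nonneg h5' (norm_nonneg ((u : W)))]
  -- bound on u
  have hu : ‖(u : W)‖ ≤ ‖g‖ := by
    have h := hb u
    have h1 : m (v : W) (u : W) = ⟪(u : W), (u : W)⟫ := ha u
    have h2 : ⟪(v : W), (u : W)⟫ = m (v : W) (v : W) := by
      rw [real_inner_comm]; exact (ha v).symm
    have h3 : 0 ≤ ⟪Tu, (u : W)⟫ := hT1 _
    have h4 : g (u : W) ≤ ‖g‖ * ‖(u : W)‖ := by
      have := g.le_opNorm (u : W)
      rw [Real.norm_eq_abs] at this
      linarith [le_abs_self (g (u : W))]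
    have h5u : ⟪(u : W), (u : W)⟫ = ‖(u : W)‖ ^ 2 := real_inner_self_eq_norm_sq _
    have hsq : ‖(u : W)‖ ^ 2 ≤ ‖g‖ * ‖(u : W)‖ := by
      nlinarith [hmpsd (v : W)]
    exact cancel _ _ (norm_nonneg _) hsq hg0
  -- bound on v
  have hv : ‖(v : W)‖ ≤ (1 + Real.sqrt 5) * ‖g‖ := by
    have h := hb v
    have h4 : g (v : W) ≤ ‖g‖ * ‖(v : W)‖ := by
      have := g.le_opNorm (v : W)
      rw [Real.norm_eq_abs] at this
      linarith [le_abs_self (g (v : W))]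
    have h6 : -⟪Tu, (v : W)⟫ ≤ ‖Tu‖ * ‖(v : W)‖ := by
      have := abs_real_inner_le_norm Tu (v : W)
      linarith [neg_abs_le ⟪Tu, (v : W)⟫]
    have h7 : ⟪(v : W), (v : W)⟫ = ‖(v : W)‖ ^ 2 := real_inner_self_eq_norm_sq _
    have h8 : ‖Tu‖ * ‖(v : W)‖ ≤ Real.sqrt 5 * ‖(u : W)‖ * ‖(v : W)‖ :=
      mul_le_mul_of_nonneg_right hTub (norm_nonneg _)
    have h9 : Real.sqrt 5 * ‖(u : W)‖ * ‖(v : W)‖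
        ≤ Real.sqrt 5 * ‖g‖ * ‖(v : W)‖ := by
      have := mul_le_mul_of_nonneg_left hu h5'
      exact mul_le_mul_of_nonneg_right this (norm_nonneg _)
    have hsq : ‖(v : W)‖ ^ 2 ≤ ((1 + Real.sqrt 5) * ‖g‖) * ‖(v : W)‖ := by
      nlinarith [hmpsd (v : W)]
    exact cancel _ _ (norm_nonneg _) hsq (by positivity)
  refine ⟨hu, hv, ?_⟩
  -- bound on Th u
  have h := hTh u (Th u)
  have h1 : ‖((Th u : Wh) : W)‖ ^ 2 = ⟪Tu, ((Th u : Wh) : W)⟫ := by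
    rw [← h, real_inner_self_eq_norm_sq]
  have h2 : ⟪Tu, ((Th u : Wh) : W)⟫ ≤ ‖Tu‖ * ‖((Th u : Wh) : W)‖ :=
    real_inner_le_norm _ _
  have h8 : ‖Tu‖ * ‖((Th u : Wh) : W)‖
      ≤ Real.sqrt 5 * ‖(u : W)‖ * ‖((Th u : Wh) : W)‖ :=
    mul_le_mul_of_nonneg_right hTub (norm_nonneg _)
  have h9 : Real.sqrt 5 * ‖(u : W)‖ * ‖((Th u : Wh) : W)‖
      ≤ Real.sqrt 5 * ‖g‖ * ‖((Th u : Wh) : W)‖ := by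
    have := mul_le_mul_of_nonneg_left hu h5'
    exact mul_le_mul_of_nonneg_right this (norm_nonneg _)
  have hsq : ‖((Th u : Wh) : W)‖ ^ 2 ≤ (Real.sqrt 5 * ‖g‖) * ‖((Th u : Wh) : W)‖ := by
    nlinarith
  exact cancel _ _ (norm_nonneg _) hsq (mul_nonneg h5' hg0)

end Stmt8Aux

set_option maxHeartbeats 1000000 in
/-- Unique solvability of the discrete scheme: for every bounded linear functional `g`
on `W` there is a unique pair `(u_h,v_h) ∈ W_h × W_h` with
`a(u_h,v_h;φ_h,ψ_h) = g(φ_h)` for all discrete test functions, satisfying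
`‖(u_h,v_h)‖_{𝒱_h} ≤ (1/C_s)‖g‖` with `C_s = 1/(48√2)`. -/
theorem stmt_8 {W : Type*} [NormedAddCommGroup W] [InnerProductSpace ℝ W]
    [CompleteSpace W]
    (V : Submodule ℝ W) (T : V →ₗ[ℝ] W)
    (hT1 : ∀ u : V, 0 ≤ ⟪T u, (u : W)⟫)
    (hT2 : ∀ u : V, ‖T u‖ ^ 2 ≤ 5 * ‖(u : W)‖ ^ 2)
    (m : W →ₗ[ℝ] W →ₗ[ℝ] ℝ)
    (hmsym : ∀ x y : W, m x y = m y x)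
    (hmpsd : ∀ x : W, 0 ≤ m x x)
    (Wh : Submodule ℝ W) [FiniteDimensional ℝ Wh] (hWhV : Wh ≤ V)
    (Th : Wh →ₗ[ℝ] Wh)
    (hTh : ∀ (u φ : Wh),
      ⟪((Th u : Wh) : W), (φ : W)⟫ = ⟪T ⟨(u : W), hWhV u.2⟩, (φ : W)⟫)
    (g : W →L[ℝ] ℝ) :
    (∃! p : Wh × Wh, ∀ φh ψh : Wh,
      ⟪T ⟨(p.1 : W), hWhV p.1.2⟩, (φh : W)⟫ + ⟪(p.2 : W), (φh : W)⟫ +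
        m (p.2 : W) (φh : W) + ⟪(p.1 : W), (ψh : W)⟫ - m (p.2 : W) (ψh : W) =
        g (φh : W)) ∧
    ∀ p : Wh × Wh,
      (∀ φh ψh : Wh,
        ⟪T ⟨(p.1 : W), hWhV p.1.2⟩, (φh : W)⟫ + ⟪(p.2 : W), (φh : W)⟫ +
          m (p.2 : W) (φh : W) + ⟪(p.1 : W), (ψh : W)⟫ - m (p.2 : W) (ψh : W) =
          g (φh : W)) →
      Real.sqrt (‖Th p.1‖ ^ 2 + ‖(p.1 : W)‖ ^ 2 + ‖(p.2 : W)‖ ^ 2) ≤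
        (48 * Real.sqrt 2) * ‖g‖ := by
  classical
  set B := stmt8B V T m Wh hWhV with hB
  set G : Module.Dual ℝ (Wh × Wh) :=
    (g.toLinearMap.comp Wh.subtype).comp (LinearMap.fst ℝ Wh Wh) with hG
  have hBG : ∀ p : Wh × Wh,
      (∀ φh ψh : Wh,
        ⟪T ⟨(p.1 : W), hWhV p.1.2⟩, (φh : W)⟫ + ⟪(p.2 : W), (φh : W)⟫ +
          m (p.2 : W) (φh : W) + ⟪(p.1 : W), (ψh : W)⟫ - m (p.2 : W) (ψh : W) =
          g (φh : W)) ↔ B p = G := by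
    intro p
    constructor
    · intro h
      apply LinearMap.ext
      rintro ⟨φ, ψ⟩
      simpa [hB, hG] using h φ ψ
    · intro h φ ψ
      simpa [hB, hG] using LinearMap.congr_fun h (φ, ψ)
  have hinj : Function.Injective B := by
    refine (injective_iff_map_eq_zero B).mpr ?_
    intro p hp
    have hz : ∀ φh ψh : Wh,
        ⟪T ⟨(p.1 : W), hWhV p.1.2⟩, (φh : W)⟫ + ⟪(p.2 : W), (φh : W)⟫ +
          m (p.2 : W) (φh : W) + ⟪(p.1 : W), (ψh : W)⟫ - m (p.2 : W) (ψh : W) =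
          (0 : W →L[ℝ] ℝ) (φh : W) := by
      intro φ ψ
      have := LinearMap.congr_fun hp (φ, ψ)
      simpa [hB] using this
    obtain ⟨h1, h2, -⟩ := stmt8_est V T m Wh hWhV hT1 hT2 hmpsd Th hTh 0 p.1 p.2 hz
    rw [norm_zero] at h1 h2
    have e1 : p.1 = 0 := by
      have : (p.1 : W) = 0 := norm_le_zero_iff.mp h1
      exact_mod_cast this
    have e2 : p.2 = 0 := by
      have : (p.2 : W) = 0 := norm_le_zero_iff.mp (by linarith)
      exact_mod_cast this
    exact Prod.ext e1 e2
  have hsurj : Function.Surjective B :=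
    (LinearMap.injective_iff_surjective_of_finrank_eq_finrank (by simp)).mp hinj
  obtain ⟨p₀, hp₀⟩ := hsurj G
  refine ⟨⟨p₀, (hBG p₀).mpr hp₀, fun q hq => hinj (((hBG q).mp hq).trans hp₀.symm)⟩, ?_⟩
  intro p hp
  obtain ⟨h1, h2, h3⟩ := stmt8_est V T m Wh hWhV hT1 hT2 hmpsd Th hTh g p.1 p.2 hp
  have hn : ‖Th p.1‖ = ‖((Th p.1 : Wh) : W)‖ := rfl
  have hr : (0:ℝ) ≤ ‖g‖ := norm_nonneg g
  have h5 : Real.sqrt 5 ^ 2 = 5 := Real.sq_sqrt (by norm_num)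
  have h5' : (0:ℝ) ≤ Real.sqrt 5 := Real.sqrt_nonneg 5
  have h5'' : Real.sqrt 5 ≤ 3 := by nlinarith
  have hs2 : Real.sqrt 2 ^ 2 = 2 := Real.sq_sqrt (by norm_num)
  have hs2' : (0:ℝ) ≤ Real.sqrt 2 := Real.sqrt_nonneg 2
  have hkey : ‖Th p.1‖ ^ 2 + ‖(p.1 : W)‖ ^ 2 + ‖(p.2 : W)‖ ^ 2
      ≤ ((48 * Real.sqrt 2) * ‖g‖) ^ 2 := by
    have b1 : ‖Th p.1‖ ^ 2 ≤ (Real.sqrt 5 * ‖g‖) ^ 2 := by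
      rw [hn]; exact pow_le_pow_left₀ (norm_nonneg _) h3 2
    have b2 : ‖(p.1 : W)‖ ^ 2 ≤ ‖g‖ ^ 2 := pow_le_pow_left₀ (norm_nonneg _) h1 2
    have b3 : ‖(p.2 : W)‖ ^ 2 ≤ ((1 + Real.sqrt 5) * ‖g‖) ^ 2 :=
      pow_le_pow_left₀ (norm_nonneg _) h2 2
    nlinarith [sq_nonneg ‖g‖]
  calc Real.sqrt (‖Th p.1‖ ^ 2 + ‖(p.1 : W)‖ ^ 2 + ‖(p.2 : W)‖ ^ 2)
      ≤ Real.sqrt (((48 * Real.sqrt 2) * ‖g‖) ^ 2) := Real.sqrt_le_sqrt hkey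
    _ = (48 * Real.sqrt 2) * ‖g‖ := Real.sqrt_sq (by positivity)
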